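/- Let θ : A → A^λ be a primitive substitution of constant length λ ≥ 2, ~θ its synchronizing part, and Θ = θ ∨ ~θ the substitution on overline{𝒳} = {(a, M) : M ∈ 𝒳(θ), a ∈ M} given by Θ(a,M)_j = (θ(a)_j, ~θ(M)_j). Then the column numbers agree: c(Θ) = c(θ). -/

import Mathlib

open Filter Topology

/-- `substIter θ l k a j` is the `j`-th letter of `θ^k(a)`, where `θ : A → A^l` is a
substitution of constant length `l` (the letters of `θ(a)` being `θ a 0, …, θ a (l-1)`).
It is meaningful for `j < l ^ k` and satisfies
`θ^{k+1}(a)_{j'·l + r} = θ(θ^k(a)_{j'})_r`. -/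
def substIter {A : Type*} (θ : A → ℕ → A) (l : ℕ) : ℕ → A → ℕ → A
  | 0, a, _ => a
  | k + 1, a, j => θ (substIter θ l k a (j / l)) (j % l)

/-- A substitution of constant length `l` is primitive if some iterate of every letter
contains every letter. -/
def SubstPrimitive {A : Type*} (θ : A → ℕ → A) (l : ℕ) : Prop :=
  ∃ k, 1 ≤ k ∧ ∀ a b : A, ∃ j, j < l ^ k ∧ substIter θ l k a j = b

/-- Primitivity of a substitution restricted to a sub-alphabet `S`. -/
def SubstPrimitiveOn {A : Type*} (θ : A → ℕ → A) (l : ℕ) (S : Set A) : Prop :=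
  ∃ k, 1 ≤ k ∧ ∀ a ∈ S, ∀ b ∈ S, ∃ j, j < l ^ k ∧ substIter θ l k a j = b

/-- The column number of a substitution of constant length `l`, restricted to the
sub-alphabet `S`: the minimal cardinality of a column set `{θ^k(a)_j : a ∈ S}`. -/
noncomputable def columnNumberOn {A : Type*} (θ : A → ℕ → A) (l : ℕ) (S : Set A) : ℕ :=
  sInf { n : ℕ | ∃ k, 1 ≤ k ∧ ∃ j, j < l ^ k ∧
    ((fun a => substIter θ l k a j) '' S).ncard = n }

/-- The column number `c(θ)` of a substitution of constant length `l`. -/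
noncomputable def columnNumber {A : Type*} (θ : A → ℕ → A) (l : ℕ) : ℕ :=
  columnNumberOn θ l Set.univ

/-- The one-sided fixed point `u` of `θ` obtained by iterating `θ` at a letter `a₀`
with `θ(a₀)_0 = a₀`: `u n = θ^k(a₀)_n` for any `k` with `n < l^k`. -/
def substFixedPoint {A : Type*} (θ : A → ℕ → A) (l : ℕ) (a₀ : A) : ℕ → A :=
  fun n => substIter θ l (n + 1) a₀ n

/-- The height `h(θ)`: the largest `m ≥ 1` coprime to `l` dividing
`gcd {r ≥ 1 : u[r] = u[0]}`, i.e. dividing every return time of `u[0]`. -/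
noncomputable def substHeight {A : Type*} (θ : A → ℕ → A) (l : ℕ) (a₀ : A) : ℕ :=
  sSup { m : ℕ | 1 ≤ m ∧ Nat.Coprime m l ∧
    ∀ r : ℕ, 1 ≤ r → substFixedPoint θ l a₀ r = substFixedPoint θ l a₀ 0 → m ∣ r }

/-- The subshift `X_θ ⊆ A^ℤ`: all `x` each of whose finite blocks occurs in some
`θ^k(a)`. -/
def subshift {A : Type*} (θ : A → ℕ → A) (l : ℕ) : Set (ℤ → A) :=
  { x | ∀ (i : ℤ) (n : ℕ), ∃ k, 1 ≤ k ∧ ∃ a : A, ∃ j : ℕ, j + n ≤ l ^ k ∧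
      ∀ m : ℕ, m < n → x (i + (m : ℤ)) = substIter θ l k a (j + m) }

/-- The subshift `X_x ⊆ A^ℤ` generated by a one-sided sequence `x ∈ A^ℕ`: all `z`
each of whose finite blocks occurs in `x`. -/
def subshiftOf {A : Type*} (x : ℕ → A) : Set (ℤ → A) :=
  { z | ∀ (i : ℤ) (n : ℕ), ∃ j : ℕ, ∀ m : ℕ, m < n → z (i + (m : ℤ)) = x (j + m) }

/-- The left shift on `A^ℤ`. -/
def shift {A : Type*} (x : ℤ → A) : ℤ → A := fun n => x (n + 1)

/-- A bounded arithmetic function. -/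
def BoundedSeq (u : ℕ → ℂ) : Prop := ∃ C : ℝ, ∀ n, ‖u n‖ ≤ C

/-- A multiplicative arithmetic function: `u(mn) = u(m)u(n)` for coprime `m, n`. -/
def MultiplicativeSeq (u : ℕ → ℂ) : Prop :=
  ∀ m n : ℕ, Nat.Coprime m n → u (m * n) = u m * u n

/-- An aperiodic arithmetic function: zero mean along every arithmetic progression. -/
def AperiodicSeq (u : ℕ → ℂ) : Prop :=
  ∀ a b : ℕ, 1 ≤ a →
    Tendsto (fun N : ℕ => (N : ℂ)⁻¹ * ∑ n ∈ Finset.Icc 1 N, u (a * n + b)) atTop (nhds 0)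

/-- The Weyl pseudo-metric
`d_W(x,y) = limsup_N sup_{ℓ ≥ 1} (1/N)·#{ℓ ≤ n < ℓ+N : x n ≠ y n}`. -/
noncomputable def weylDist {B : Type*} (x y : ℕ → B) : ℝ :=
  limsup (fun N : ℕ =>
    ⨆ ℓ : ℕ, ⨆ _ : 1 ≤ ℓ,
      (({ n : ℕ | ℓ ≤ n ∧ n < ℓ + N ∧ x n ≠ y n }.ncard : ℝ) / N)) atTop

/-- A periodic sequence. -/
def IsPeriodicSeq {B : Type*} (v : ℕ → B) : Prop :=
  ∃ p, 1 ≤ p ∧ ∀ n, v (n + p) = v n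

/-- Weyl rational almost periodicity: a `d_W`-limit of periodic sequences. -/
def WRAPSeq {B : Type*} (x : ℕ → B) : Prop :=
  ∀ ε : ℝ, 0 < ε → ∃ v : ℕ → B, IsPeriodicSeq v ∧ weylDist x v < ε

/-- The family `𝒳(θ)` of column sets realizing the column number of `θ`. -/
noncomputable def columnSets {A : Type*} (θ : A → ℕ → A) (l : ℕ) : Set (Set A) :=
  { M | (∃ k, 1 ≤ k ∧ ∃ j, j < l ^ k ∧ M = (fun a => substIter θ l k a j) '' Set.univ) ∧
        M.ncard = columnNumber θ l }

/-- The synchronizing part `~θ` of `θ`, as a substitution on subsets of the alphabet: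
`~θ(M)_j = {θ(a)_j : a ∈ M}`. -/
def synchPart {A : Type*} (θ : A → ℕ → A) : Set A → ℕ → Set A :=
  fun M j => (fun a => θ a j) '' M

/-- The joining `θ ∨ ζ` of two substitutions of the same constant length. -/
def joinSub {A B : Type*} (θ : A → ℕ → A) (ζ : B → ℕ → B) : A × B → ℕ → A × B :=
  fun p j => (θ p.1 j, ζ p.2 j)

/-- The pure base `θ^{(h)}` of `θ`: a substitution of length `l` on blocks of length `h`,
`θ^{(h)}(w)_j = θ(w)[jh, (j+1)h−1]`, where `θ(w)` is the concatenation
`θ(w_0)…θ(w_{h-1})`. -/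
def pureBase {A : Type*} (θ : A → ℕ → A) (l h : ℕ) : (Fin h → A) → ℕ → (Fin h → A) :=
  fun w j i => θ (w ⟨(j * h + i.val) / l % h, Nat.mod_lt _ i.pos⟩) ((j * h + i.val) % l)

/-- Iterated cocycle `σ^{(k)}`, with `σ^{(1)} = σ` and
`σ^{(k+1)}(M, j₁·l + j₂) = σ^{(k)}(M, j₁) ∘ σ(~θ^k(M)_{j₁}, j₂)`. -/
def sigmaIter {X : Type*} {c : ℕ} (tilde : X → ℕ → X)
    (σ : X → ℕ → Equiv.Perm (Fin c)) (l : ℕ) : ℕ → X → ℕ → Equiv.Perm (Fin c)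
  | 0, _, _ => 1
  | k + 1, M, j =>
      sigmaIter tilde σ l k M (j / l) * σ (substIter tilde l k M (j / l)) (j % l)

/-- The group extension substitution `Θ̂(g, M)_j = (g ∘ σ(M,j), ~θ(M)_j)`. -/
def hatTheta {X : Type*} {c : ℕ} (tilde : X → ℕ → X)
    (σ : X → ℕ → Equiv.Perm (Fin c)) : Equiv.Perm (Fin c) × X → ℕ → Equiv.Perm (Fin c) × X :=
  fun p j => (p.1 * σ p.2 j, tilde p.2 j)

/-- The group `G` generated by the cocycle values `σ(M, j)`, `M ∈ 𝒳`, `j < l`. -/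
def cocycleGroup {X : Type*} {c : ℕ} (σ : X → ℕ → Equiv.Perm (Fin c)) (l : ℕ) :
    Subgroup (Equiv.Perm (Fin c)) :=
  Subgroup.closure { g | ∃ M : X, ∃ j, j < l ∧ g = σ M j }

lemma join_iter {A B : Type*} (θ : A → ℕ → A) (ζ : B → ℕ → B) (l : ℕ) :
    ∀ (k : ℕ) (p : A × B) (j : ℕ),
      substIter (joinSub θ ζ) l k p j = (substIter θ l k p.1 j, substIter ζ l k p.2 j)
  | 0, p, j => by simp [substIter]
  | k + 1, p, j => by simp [substIter, join_iter θ ζ l k, joinSub]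

lemma synch_iter {A : Type*} (θ : A → ℕ → A) (l : ℕ) :
    ∀ (k : ℕ) (M : Set A) (j : ℕ),
      substIter (synchPart θ) l k M j = (fun a => substIter θ l k a j) '' M
  | 0, M, j => by simp [substIter]
  | k + 1, M, j => by
      simp only [substIter, synch_iter θ l k, synchPart, Set.image_image]

lemma substIter_add {A : Type*} (θ : A → ℕ → A) {l : ℕ} (hl : 0 < l) (k : ℕ) (a : A) (j : ℕ) :
    ∀ (k' j' : ℕ), j' < l ^ k' →
      substIter θ l (k + k') a (j * l ^ k' + j') = substIter θ l k' (substIter θ l k a j) j'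
  | 0, j', hj' => by
      have h0 : j' = 0 := by simpa using Nat.lt_one_iff.mp (by simpa using hj')
      subst h0; simp [substIter]
  | k' + 1, j', hj' => by
      have hJ : j * l ^ (k' + 1) + j' = j' + (j * l ^ k') * l := by ring
      have hdiv : (j * l ^ (k' + 1) + j') / l = j * l ^ k' + j' / l := by
        rw [hJ, Nat.add_mul_div_right _ _ hl]; ring
      have hmod : (j * l ^ (k' + 1) + j') % l = j' % l := by
        rw [hJ, Nat.add_mul_mod_self_right]
      have hlt : j' / l < l ^ k' := by
        rw [Nat.div_lt_iff_lt_mul hl]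
        calc j' < l ^ (k' + 1) := hj'
          _ = l ^ k' * l := pow_succ l k'
      have hk : k + (k' + 1) = (k + k') + 1 := by ring
      rw [hk]
      show θ (substIter θ l (k + k') a ((j * l ^ (k' + 1) + j') / l))
          ((j * l ^ (k' + 1) + j') % l) = _
      rw [hdiv, hmod, substIter_add θ hl k a j k' (j' / l) hlt]
      rfl

/-- The joining `Θ = θ ∨ ~θ` of a primitive substitution `θ` with its
synchronizing part has the same column number as `θ`: `c(Θ) = c(θ)`. -/
theorem join_with_synchronizing_columnNumber
    {A : Type*} [Finite A] (l : ℕ) (hl : 2 ≤ l)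
    (θ : A → ℕ → A) (hθ : SubstPrimitive θ l) :
    columnNumberOn (joinSub θ (synchPart θ)) l
        { p : A × Set A | p.2 ∈ columnSets θ l ∧ p.1 ∈ p.2 } = columnNumber θ l := by
  classical
  have hl0 : 0 < l := by omega
  set Θ := joinSub θ (synchPart θ) with hΘ
  set S := { p : A × Set A | p.2 ∈ columnSets θ l ∧ p.1 ∈ p.2 } with hS
  set c := columnNumber θ l with hc
  have hcdef : c = sInf { n : ℕ | ∃ k, 1 ≤ k ∧ ∃ j, j < l ^ k ∧
      ((fun a => substIter θ l k a j) '' Set.univ).ncard = n } := rfl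
  -- every column cardinality of θ is ≥ c
  have hmemset : ∀ k, 1 ≤ k → ∀ j, j < l ^ k →
      c ≤ ((fun a => substIter θ l k a j) '' Set.univ).ncard := by
    intro k hk j hj
    rw [hcdef]
    exact Nat.sInf_le ⟨k, hk, j, hj, rfl⟩
  -- c is attained
  have hne : { n : ℕ | ∃ k, 1 ≤ k ∧ ∃ j, j < l ^ k ∧
      ((fun a => substIter θ l k a j) '' Set.univ).ncard = n }.Nonempty :=
    ⟨_, 1, le_refl 1, 0, by simpa using hl0, rfl⟩
  have hmin := hcdef ▸ Nat.sInf_mem hne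
  obtain ⟨k₀, hk₀, j₀, hj₀, hcard⟩ : ∃ k, 1 ≤ k ∧ ∃ j, j < l ^ k ∧
      ((fun a => substIter θ l k a j) '' Set.univ).ncard = c := hmin
  set M₀ := (fun a => substIter θ l k₀ a j₀) '' Set.univ with hM₀
  have hM₀X : M₀ ∈ columnSets θ l := ⟨⟨k₀, hk₀, j₀, hj₀, rfl⟩, hcard⟩
  -- image composition
  have himg : ∀ (k j k₁ j₁ : ℕ), j < l ^ k →
      (fun a => substIter θ l k a j) '' ((fun a => substIter θ l k₁ a j₁) '' Set.univ)
        = (fun a => substIter θ l (k₁ + k) a (j₁ * l ^ k + j)) '' Set.univ := by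
    intro k j k₁ j₁ hj
    rw [Set.image_image]
    exact Set.image_congr fun a _ => (substIter_add θ hl0 k₁ a j₁ k j hj).symm
  have hidx : ∀ {k j k₁ j₁ : ℕ}, j < l ^ k → j₁ < l ^ k₁ → j₁ * l ^ k + j < l ^ (k₁ + k) := by
    intro k j k₁ j₁ hj hj₁
    calc j₁ * l ^ k + j < j₁ * l ^ k + l ^ k := by omega
      _ = (j₁ + 1) * l ^ k := by ring
      _ ≤ l ^ k₁ * l ^ k := Nat.mul_le_mul (by omega) le_rfl
      _ = l ^ (k₁ + k) := (pow_add l k₁ k).symm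
  -- the synchronizing part collapses every column set to M₀ at (k₀, j₀)
  have hcollapse : ∀ M ∈ columnSets θ l, (fun a => substIter θ l k₀ a j₀) '' M = M₀ := by
    rintro M ⟨⟨k₁, hk₁, j₁, hj₁, rfl⟩, hMc⟩
    have hsub : (fun a => substIter θ l k₀ a j₀) ''
        ((fun a => substIter θ l k₁ a j₁) '' Set.univ) ⊆ M₀ :=
      Set.image_mono (Set.subset_univ _)
    have hge : c ≤ ((fun a => substIter θ l k₀ a j₀) ''
        ((fun a => substIter θ l k₁ a j₁) '' Set.univ)).ncard := by
      rw [himg k₀ j₀ k₁ j₁ hj₀]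
      exact hmemset (k₁ + k₀) (by omega) _ (hidx hj₀ hj₁)
    exact Set.eq_of_subset_of_ncard_le hsub (by rw [hcard]; exact hge) (Set.toFinite _)
  have hinj : ∀ N : Set A, Function.Injective (fun x : A => (x, N)) :=
    fun N x y h => congrArg Prod.fst h
  -- upper bound
  have hupper : ((fun p => substIter Θ l k₀ p j₀) '' S).ncard ≤ c := by
    have hsub : (fun p => substIter Θ l k₀ p j₀) '' S ⊆ (fun x => (x, M₀)) '' M₀ := by
      rintro _ ⟨⟨a, M⟩, ⟨hMX, haM⟩, rfl⟩
      refine ⟨substIter θ l k₀ a j₀, ⟨a, Set.mem_univ a, rfl⟩, ?_⟩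
      show (substIter θ l k₀ a j₀, M₀) = substIter Θ l k₀ (a, M) j₀
      rw [hΘ, join_iter θ (synchPart θ) l k₀ (a, M) j₀, synch_iter,
        hcollapse M hMX]
    calc ((fun p => substIter Θ l k₀ p j₀) '' S).ncard
        ≤ ((fun x => (x, M₀)) '' M₀).ncard := Set.ncard_le_ncard hsub (Set.toFinite _)
      _ = M₀.ncard := Set.ncard_image_of_injective _ (hinj M₀)
      _ = c := hcard
  -- lower bound
  have hlow : ∀ k, 1 ≤ k → ∀ j, j < l ^ k →
      c ≤ ((fun p => substIter Θ l k p j) '' S).ncard := by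
    intro k hk j hj
    have hsub : (fun x => (x, substIter (synchPart θ) l k M₀ j)) ''
        ((fun a => substIter θ l k a j) '' M₀)
        ⊆ (fun p => substIter Θ l k p j) '' S := by
      rintro _ ⟨_, ⟨a, haM, rfl⟩, rfl⟩
      exact ⟨(a, M₀), ⟨hM₀X, haM⟩, join_iter θ (synchPart θ) l k (a, M₀) j⟩
    have h1 : c ≤ ((fun a => substIter θ l k a j) '' M₀).ncard := by
      rw [hM₀, himg k j k₀ j₀ hj]
      exact hmemset _ (by omega) _ (hidx hj hj₀)
    calc c ≤ ((fun a => substIter θ l k a j) '' M₀).ncard := h1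
      _ = ((fun x => (x, substIter (synchPart θ) l k M₀ j)) ''
            ((fun a => substIter θ l k a j) '' M₀)).ncard :=
          (Set.ncard_image_of_injective _ (hinj _)).symm
      _ ≤ _ := Set.ncard_le_ncard hsub (Set.toFinite _)
  show sInf { n : ℕ | ∃ k, 1 ≤ k ∧ ∃ j, j < l ^ k ∧
      ((fun p => substIter Θ l k p j) '' S).ncard = n } = c
  apply le_antisymm
  · exact le_trans (Nat.sInf_le ⟨k₀, hk₀, j₀, hj₀, rfl⟩) hupper
  · exact le_csInf ⟨_, k₀, hk₀, j₀, hj₀, rfl⟩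
      (by rintro n ⟨k, hk, j, hj, rfl⟩; exact hlow k hk j hj)
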